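/- Let f : ℝⁿ → ℝ be differentiable and coordinatewise L-smooth for some L ∈ ℝⁿ with all entries Lᵢ > 0, and consider one step of the stochastic MTSL iteration at time t with unbiased gradient estimate: E[g̃(t) | ℱ_t] = ∇f(θ(t)) almost surely, g̃(t) square-integrable, and f(θ(t+1)) integrable. Then almost surely E[ f(θ(t+1)) | ℱ_t ] ≤ f(θ(t)) − Σᵢ ηᵢ(t) (∂ᵢf(θ(t)))² + (1/2) Σᵢ Lᵢ ηᵢ(t)² E[ g̃ᵢ(t)² | ℱ_t ]. -/

import Mathlib

open MeasureTheory Finset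

/-- The `i`-th partial derivative of `f : ℝⁿ → ℝ` at `x`. -/
noncomputable def pderiv' {n : ℕ} (f : (Fin n → ℝ) → ℝ) (i : Fin n) (x : Fin n → ℝ) : ℝ :=
  fderiv ℝ f x (Pi.single i 1)

section Aux
variable {Ω : Type*} {F m0 : MeasurableSpace Ω} {μ : Measure Ω}


lemma aux_condexp_le_of_ae_le [IsFiniteMeasure μ] (hF : F ≤ m0)
    {W u : Ω → ℝ} (hW : Integrable W μ) (hu : StronglyMeasurable[F] u)
    (h : W ≤ᵐ[μ] u) : μ[W|F] ≤ᵐ[μ] u := by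
  set M := μ[W|F] with hM
  set A : Set Ω := {ω | u ω < M ω} with hA
  have hAmeas : MeasurableSet[F] A :=
    measurableSet_lt hu.measurable stronglyMeasurable_condExp.measurable
  have hAm0 : MeasurableSet A := hF _ hAmeas
  have hMint : Integrable M μ := integrable_condExp
  have huA : IntegrableOn u A μ := by
    refine Integrable.mono' (hW.abs.add hMint.abs).integrableOn
      ((hu.mono hF).aestronglyMeasurable.restrict) ?_
    filter_upwards [ae_restrict_of_ae h, ae_restrict_mem hAm0] with ω hw hmem
    have hum : u ω ≤ M ω := le_of_lt hmem
    rw [Real.norm_eq_abs, abs_le]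
    constructor
    · have := neg_abs_le (W ω); have := abs_nonneg (M ω); simp only [Pi.add_apply]; linarith
    · have := le_abs_self (M ω); have := abs_nonneg (W ω); simp only [Pi.add_apply]; linarith
  have hWA : IntegrableOn W A μ := hW.integrableOn
  have hMA : IntegrableOn M A μ := hMint.integrableOn
  have e1 : ∫ ω in A, M ω ∂μ = ∫ ω in A, W ω ∂μ := setIntegral_condExp hF hW hAmeas
  have e2 : ∫ ω in A, W ω ∂μ ≤ ∫ ω in A, u ω ∂μ :=
    integral_mono_ae hWA huA (ae_restrict_of_ae h)
  have e3 : ∫ ω in A, u ω ∂μ ≤ ∫ ω in A, M ω ∂μ :=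
    integral_mono_ae huA hMA ((ae_restrict_mem hAm0).mono fun ω hω => le_of_lt hω)
  have e4 : ∫ ω in A, (M ω - u ω) ∂μ = 0 := by
    rw [integral_sub hMA huA]; linarith
  have e5 : (fun ω => M ω - u ω) =ᵐ[μ.restrict A] 0 :=
    (integral_eq_zero_iff_of_nonneg_ae
      ((ae_restrict_mem hAm0).mono fun ω hω => sub_nonneg.2 (le_of_lt hω))
      (hMA.sub huA)).1 e4
  have e6 : μ A = 0 := by
    have hfalse : ∀ᵐ ω ∂μ.restrict A, False := by
      filter_upwards [e5, ae_restrict_mem hAm0] with ω h0 hmem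
      have : u ω < M ω := hmem
      simp only [Pi.zero_apply] at h0
      linarith
    have h0 : μ.restrict A Set.univ = 0 := by
      have := ae_iff.1 hfalse
      simpa using this
    rwa [Measure.restrict_apply_univ] at h0
  have : ∀ᵐ ω ∂μ, ω ∉ A := (ae_iff).2 (by simpa using e6)
  filter_upwards [this] with ω hω
  exact not_lt.1 fun hlt => hω hlt

lemma aux_condexp_proj {n : ℕ} [IsFiniteMeasure μ] (hF : F ≤ m0)
    {g : Ω → Fin n → ℝ} (hg : Integrable g μ) (i : Fin n) :
    (μ[fun ω => g ω i|F]) =ᵐ[μ] fun ω => (μ[g|F]) ω i := by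
  have hproj := (ContinuousLinearMap.proj (R := ℝ) (φ := fun _ : Fin n => ℝ) i)
  refine (ae_eq_condExp_of_forall_setIntegral_eq hF
    ((ContinuousLinearMap.proj (R := ℝ) (φ := fun _ : Fin n => ℝ) i).integrable_comp hg)
    (fun s _ _ => ((ContinuousLinearMap.proj (R := ℝ) (φ := fun _ : Fin n => ℝ) i).integrable_comp
      (integrable_condExp (f := g) (m := F))).integrableOn)
    (fun s hs hμs => ?_)
    (((continuous_apply i).comp_stronglyMeasurable
      (stronglyMeasurable_condExp (f := g) (m := F))).aestronglyMeasurable)).symm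
  have h1 : ∫ ω in s, (μ[g|F]) ω i ∂μ
      = (ContinuousLinearMap.proj (R := ℝ) (φ := fun _ : Fin n => ℝ) i) (∫ ω in s, (μ[g|F]) ω ∂μ) :=
    ((ContinuousLinearMap.proj (R := ℝ) (φ := fun _ : Fin n => ℝ) i).integral_comp_comm
      (integrable_condExp.integrableOn))
  have h2 : ∫ ω in s, g ω i ∂μ
      = (ContinuousLinearMap.proj (R := ℝ) (φ := fun _ : Fin n => ℝ) i) (∫ ω in s, g ω ∂μ) :=
    ((ContinuousLinearMap.proj (R := ℝ) (φ := fun _ : Fin n => ℝ) i).integral_comp_comm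
      (hg.integrableOn))
  simp only [ContinuousLinearMap.proj_apply]
  rw [h1, h2, setIntegral_condExp hF hg hs]

lemma aux_memℒp_condexp [IsFiniteMeasure μ] (hF : F ≤ m0)
    {h : Ω → ℝ} (hh : MemLp h 2 μ) : MemLp (μ[h|F]) 2 μ := by
  set H := hh.toLp h with hH
  have heq : (condExpL2 ℝ ℝ hF H : Ω → ℝ) =ᵐ[μ] μ[h|F] := by
    refine ae_eq_condExp_of_forall_setIntegral_eq hF (hh.integrable one_le_two)
      (fun s _ _ => (integrable_condExpL2_of_isFiniteMeasure hF).integrableOn)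
      (fun s hs hμs => ?_)
      (aestronglyMeasurable_condExpL2 hF H)
    rw [integral_condExpL2_eq hF H hs hμs.ne]
    exact setIntegral_congr_ae (hF s hs) ((hh.coeFn_toLp).mono fun ω hω _ => hω)
  exact (Lp.memLp _).ae_eq heq

lemma aux_ae_sum {ι Ω : Type*} [Fintype ι] {m0 : MeasurableSpace Ω} {μ : Measure Ω}
    {f g : ι → Ω → ℝ} (h : ∀ i, f i =ᵐ[μ] g i) : (∑ i, f i) =ᵐ[μ] ∑ i, g i := by
  have hall : ∀ᵐ ω ∂μ, ∀ i, f i ω = g i ω := ae_all_iff.2 h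
  filter_upwards [hall] with ω hω
  simp only [Finset.sum_apply]
  exact Finset.sum_congr rfl fun i _ => hω i

end Aux

/-- One step of the stochastic MTSL iteration on a coordinatewise `L`-smooth `f` with an
unbiased gradient estimate: almost surely
`E[f(θ(t+1)) | ℱₜ] ≤ f(θ(t)) − Σᵢ ηᵢ(t)(∂ᵢf(θ(t)))² + (1/2) Σᵢ Lᵢ ηᵢ(t)² E[g̃ᵢ(t)² | ℱₜ]`. -/
theorem mtsl_sgd_descent_step {n : ℕ} {Ω : Type*} {m0 : MeasurableSpace Ω}
    (μ : Measure Ω) [IsProbabilityMeasure μ]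
    (F : MeasurableSpace Ω) (hF : F ≤ m0)
    (f : (Fin n → ℝ) → ℝ) (L : Fin n → ℝ)
    (hdiff : Differentiable ℝ f)
    (hL : ∀ i, 0 < L i)
    (hsmooth : ∀ x y : Fin n → ℝ,
      f y ≤ f x + (∑ i, pderiv' f i x * (y i - x i)) + (1 / 2) * ∑ i, L i * (y i - x i) ^ 2)
    (η : Fin n → ℝ) (hη : ∀ i, 0 < η i)
    (θ gt : Ω → Fin n → ℝ)
    (hθmeas : Measurable[F] θ)
    (hgt2 : MemLp gt 2 μ)
    (hunbiased : μ[gt | F] =ᵐ[μ] fun ω => fun i => pderiv' f i (θ ω))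
    (hfint : Integrable (fun ω => f (fun i => θ ω i - η i * gt ω i)) μ) :
    μ[(fun ω => f (fun i => θ ω i - η i * gt ω i)) | F] ≤ᵐ[μ]
      fun ω => f (θ ω) - (∑ i, η i * (pderiv' f i (θ ω)) ^ 2)
        + (1 / 2) * ∑ i, L i * (η i) ^ 2 * (μ[(fun ω' => (gt ω' i) ^ 2) | F]) ω := by
  -- component functions
  set D : Fin n → Ω → ℝ := fun i ω => pderiv' f i (θ ω) with hDdef
  have hgint : Integrable gt μ := hgt2.integrable one_le_two
  have hgi : ∀ i, MemLp (fun ω => gt ω i) 2 μ := fun i =>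
    (ContinuousLinearMap.proj (R := ℝ) (φ := fun _ : Fin n => ℝ) i).comp_memLp' hgt2
  have hgii : ∀ i, Integrable (fun ω => gt ω i) μ := fun i => (hgi i).integrable one_le_two
  have hDmeas : ∀ i, StronglyMeasurable[F] (D i) := fun i =>
    ((measurable_fderiv_apply_const ℝ f (Pi.single i 1)).comp hθmeas).stronglyMeasurable
  have hDeq : ∀ i, (μ[fun ω => gt ω i|F]) =ᵐ[μ] D i := fun i =>
    (aux_condexp_proj hF hgint i).trans (hunbiased.mono fun ω hω => by
      simpa [hDdef] using congrFun hω i)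
  have hD2 : ∀ i, MemLp (D i) 2 μ := fun i =>
    (aux_memℒp_condexp hF (hgi i)).ae_eq (hDeq i)
  have hgD_int : ∀ i, Integrable (fun ω => gt ω i * D i ω) μ := by
    intro i
    refine Integrable.mono'
      (((hgi i).integrable_sq.add (hD2 i).integrable_sq).const_mul (1/2))
      ((hgi i).aestronglyMeasurable.mul (hD2 i).aestronglyMeasurable) ?_
    refine Filter.Eventually.of_forall fun ω => ?_
    rw [Real.norm_eq_abs, abs_mul]
    simp only [Pi.add_apply]
    nlinarith [sq_nonneg (|gt ω i| - |D i ω|), sq_abs (gt ω i), sq_abs (D i ω),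
      abs_nonneg (gt ω i), abs_nonneg (D i ω)]
  -- the correction terms
  set Z1 : Ω → ℝ := fun ω => ∑ i, L i * η i ^ 2 * gt ω i ^ 2 with hZ1def
  set Z2 : Ω → ℝ := fun ω => ∑ i, η i * (gt ω i * D i ω) with hZ2def
  set Z : Ω → ℝ := fun ω => (1/2) * Z1 ω - Z2 ω with hZdef
  have hZ1int : Integrable Z1 μ :=
    integrable_finset_sum _ fun i _ => ((hgi i).integrable_sq).const_mul _
  have hZ2int : Integrable Z2 μ :=
    integrable_finset_sum _ fun i _ => (hgD_int i).const_mul _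
  have hZint : Integrable Z μ := (hZ1int.const_mul _).sub hZ2int
  set X : Ω → ℝ := fun ω => f (fun i => θ ω i - η i * gt ω i) with hXdef
  set W : Ω → ℝ := fun ω => X ω - Z ω with hWdef
  have hWint : Integrable W μ := hfint.sub hZint
  -- pointwise descent inequality
  have hWle : W ≤ᵐ[μ] fun ω => f (θ ω) := by
    refine Filter.Eventually.of_forall fun ω => ?_
    have hs := hsmooth (θ ω) (fun i => θ ω i - η i * gt ω i)
    have e1 : ∑ i, pderiv' f i (θ ω) * ((θ ω i - η i * gt ω i) - θ ω i) = -Z2 ω := by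
      rw [hZ2def, ← Finset.sum_neg_distrib]
      exact Finset.sum_congr rfl fun i _ => by rw [hDdef]; ring
    have e2 : ∑ i, L i * ((θ ω i - η i * gt ω i) - θ ω i) ^ 2 = Z1 ω := by
      rw [hZ1def]
      exact Finset.sum_congr rfl fun i _ => by ring
    rw [e1, e2] at hs
    simp only [hWdef, hZdef, hXdef]
    linarith
  have hfθmeas : StronglyMeasurable[F] (fun ω => f (θ ω)) :=
    (hdiff.continuous.measurable.comp hθmeas).stronglyMeasurable
  have hcondW : μ[W|F] ≤ᵐ[μ] fun ω => f (θ ω) :=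
    aux_condexp_le_of_ae_le hF hWint hfθmeas hWle
  -- condexp of X decomposes
  have hXW : X = W + Z := by funext ω; simp [hWdef]
  have hcondX : μ[X|F] =ᵐ[μ] μ[W|F] + μ[Z|F] := by
    rw [hXW]; exact condExp_add hWint hZint F
  -- condexp of Z
  have hcondZ1 : μ[Z1|F] =ᵐ[μ] fun ω => ∑ i, L i * η i ^ 2 * (μ[fun ω' => gt ω' i ^ 2|F]) ω := by
    have h0 : Z1 = ∑ i : Fin n, fun ω => L i * η i ^ 2 * gt ω i ^ 2 := by
      funext ω; rw [hZ1def]; simp [Finset.sum_apply]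
    rw [h0]
    refine (condExp_finsetSum (fun i _ => ((hgi i).integrable_sq).const_mul _) F).trans ?_
    have : ∀ i : Fin n,
        μ[fun ω => L i * η i ^ 2 * gt ω i ^ 2|F]
          =ᵐ[μ] fun ω => L i * η i ^ 2 * (μ[fun ω' => gt ω' i ^ 2|F]) ω := by
      intro i
      have := condExp_smul (μ := μ) (m := F) (L i * η i ^ 2) (fun ω => gt ω i ^ 2)
      simpa [Pi.smul_def, smul_eq_mul] using this
    calc (∑ i : Fin n, μ[fun ω => L i * η i ^ 2 * gt ω i ^ 2|F])
        =ᵐ[μ] ∑ i : Fin n, (fun ω => L i * η i ^ 2 * (μ[fun ω' => gt ω' i ^ 2|F]) ω) := by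
          exact aux_ae_sum this
      _ = fun ω => ∑ i, L i * η i ^ 2 * (μ[fun ω' => gt ω' i ^ 2|F]) ω := by
          funext ω; simp [Finset.sum_apply]
  have hcondgD : ∀ i : Fin n,
      μ[fun ω => gt ω i * D i ω|F] =ᵐ[μ] fun ω => D i ω * D i ω := by
    intro i
    have hcomm : (fun ω => gt ω i * D i ω) = (D i) * (fun ω => gt ω i) := by
      funext ω; simp [mul_comm]
    rw [hcomm]
    refine (condExp_mul_of_stronglyMeasurable_left (hDmeas i) ?_ (hgii i)).trans ?_
    · have := hgD_int i
      refine this.congr ?_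
      refine Filter.Eventually.of_forall fun ω => ?_
      simp [mul_comm]
    · refine ((hDeq i).mono fun ω hω => ?_)
      simp only [Pi.mul_apply]
      rw [hω]
  have hcondZ2 : μ[Z2|F] =ᵐ[μ] fun ω => ∑ i, η i * (D i ω) ^ 2 := by
    have h0 : Z2 = ∑ i : Fin n, fun ω => η i * (gt ω i * D i ω) := by
      funext ω; rw [hZ2def]; simp [Finset.sum_apply]
    rw [h0]
    refine (condExp_finsetSum (fun i _ => (hgD_int i).const_mul _) F).trans ?_
    have hterm : ∀ i : Fin n,
        μ[fun ω => η i * (gt ω i * D i ω)|F] =ᵐ[μ] fun ω => η i * (D i ω) ^ 2 := by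
      intro i
      have h1 := condExp_smul (μ := μ) (m := F) (η i) (fun ω => gt ω i * D i ω)
      have h2 : μ[fun ω => η i * (gt ω i * D i ω)|F]
          =ᵐ[μ] fun ω => η i * (μ[fun ω' => gt ω' i * D i ω'|F]) ω := by
        simpa [Pi.smul_def, smul_eq_mul] using h1
      refine h2.trans ?_
      refine (hcondgD i).mono fun ω hω => ?_
      simp only []
      rw [hω]; ring
    calc (∑ i : Fin n, μ[fun ω => η i * (gt ω i * D i ω)|F])
        =ᵐ[μ] ∑ i : Fin n, (fun ω => η i * (D i ω) ^ 2) := by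
          exact aux_ae_sum hterm
      _ = fun ω => ∑ i, η i * (D i ω) ^ 2 := by funext ω; simp [Finset.sum_apply]
  have hZsplit : Z = (1/2 : ℝ) • Z1 - Z2 := by
    funext ω; simp [hZdef, smul_eq_mul]
  have hcondZ : μ[Z|F] =ᵐ[μ]
      fun ω => (1/2) * ∑ i, L i * η i ^ 2 * (μ[fun ω' => gt ω' i ^ 2|F]) ω
        - ∑ i, η i * (D i ω) ^ 2 := by
    rw [hZsplit]
    refine (condExp_sub ((hZ1int.const_mul ((1:ℝ)/2)).congr
      (Filter.Eventually.of_forall (fun ω => by simp [smul_eq_mul]))) hZ2int F).trans ?_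
    have hs1 : μ[(1/2 : ℝ) • Z1|F] =ᵐ[μ] (1/2 : ℝ) • μ[Z1|F] := condExp_smul _ _ _
    filter_upwards [hs1, hcondZ1, hcondZ2] with ω h1 h2 h3
    simp only [Pi.sub_apply, Pi.smul_apply, smul_eq_mul] at *
    rw [h1, h2, h3]
  -- combine
  refine Filter.EventuallyLE.trans (Filter.EventuallyEq.le hcondX) ?_
  filter_upwards [hcondW, hcondZ] with ω h1 h2
  simp only [Pi.add_apply]
  rw [h2]
  have hWω : (μ[W|F]) ω ≤ f (θ ω) := h1
  simp only [hDdef] at *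
  linarith
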